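/- Let δ ∈ {0, 1}, A, B real with −1 < B ≤ 0 < A ≤ 1, and let γ, β be positive real numbers satisfying √2 e (γ(1 + e²)² + β(1 − 2e⁴ − e²)) ≥ ((1 + A)/(1 + B) + ω₀^δ)(e² + 1)^{7/2}. If p ∈ ℋ satisfies (p(z))^δ + γ z p′(z) + β z² p″(z) ≺ (1 + Az)/(1 + Bz), then p(z) ≺ 𝔅(z). -/

import Mathlib

open Complex

noncomputable section

/-- The open unit disk in the complex plane. -/
def unitDisk : Set ℂ := Metric.ball 0 1

/-- `f` is subordinate to `g` on the unit disk: there is an analytic Schwarz function `w`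
with `w 0 = 0`, `|w z| < 1` on the disk, and `f = g ∘ w` on the disk. -/
def Subord (f g : ℂ → ℂ) : Prop :=
  ∃ w : ℂ → ℂ, DifferentiableOn ℂ w unitDisk ∧ w 0 = 0 ∧
    (∀ z ∈ unitDisk, ‖w z‖ < 1) ∧ ∀ z ∈ unitDisk, f z = g (w z)

/-- The function `𝔅(z) = √(1 + tanh z)` (principal branch). -/
def bean (z : ℂ) : ℂ := (1 + Complex.tanh z) ^ ((1 : ℂ) / 2)

/-- `R₀ = e √(2/(e² - 1))`. -/
def R₀ : ℝ := Real.exp 1 * Real.sqrt (2 / (Real.exp 1 ^ 2 - 1))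

/-- `ω₀ = max_{θ ∈ [0, 2π)} |𝔅(e^{iθ})|`. -/
def ω₀ : ℝ :=
  sSup ((fun θ : ℝ => ‖bean (Complex.exp (θ * Complex.I))‖) '' Set.Ico 0 (2 * Real.pi))

section Auxiliary

open Metric Set

lemma mem_unitDisk_smul {z : ℂ} (hz : z ∈ unitDisk) {t : ℝ} (h0 : 0 ≤ t) (h1 : t ≤ 1) :
    (t : ℂ) * z ∈ unitDisk := by
  simp only [unitDisk, mem_ball_zero_iff] at *
  calc ‖(t:ℂ) * z‖ = t * ‖z‖ := by
        rw [norm_mul, Complex.norm_real, Real.norm_of_nonneg h0]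
    _ ≤ 1 * ‖z‖ := by
        apply mul_le_mul_of_nonneg_right h1 (norm_nonneg z)
    _ < 1 := by rw [one_mul]; exact hz

lemma zero_mem_unitDisk : (0:ℂ) ∈ unitDisk := by simp [unitDisk]

end Auxiliary
section Key
open Metric Set

lemma keyStep {ν H : ℝ} (hν : 0 < ν) (hH : 0 ≤ H) {v : ℂ → ℂ}
    (hv : AnalyticOnNhd ℂ v unitDisk) (hv0 : v 0 = 0)
    (hb : ∀ z ∈ unitDisk, ‖v z + (ν:ℂ) * (z * deriv v z)‖ ≤ H * ‖z‖) :
    ∀ z ∈ unitDisk, ‖v z‖ ≤ (H / (1 + ν)) * ‖z‖ := by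
  intro z hz
  set c : ℝ := 1/ν with hc
  have hcpos : 0 < c := by positivity
  have hνc : ν * c = 1 := by rw [hc]; field_simp
  set u : ℝ → ℂ := fun t => (t ^ c : ℝ) • v ((t:ℂ) * z) with hu
  set G : ℝ → ℂ := fun t =>
    ((c * t ^ (c-1) : ℝ)) • (v ((t:ℂ)*z) + (ν:ℂ) * (((t:ℂ)*z) * deriv v ((t:ℂ)*z))) with hG
  have hderiv : ∀ t : ℝ, 0 < t → t ≤ 1 → HasDerivAt u (G t) t := by
    intro t ht ht1
    have hmem' := mem_unitDisk_smul hz ht.le ht1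
    have htc : (t:ℝ) ^ (c-1) * t = t ^ c := by
      rw [← Real.rpow_add_one ht.ne' (c-1)]; ring_nf
    have h1 : HasDerivAt (fun s : ℝ => (s ^ c : ℝ)) (c * t ^ (c-1)) t := by
      simpa [mul_comm] using Real.hasDerivAt_rpow_const (p := c) (Or.inl ht.ne')
    have h2c : HasDerivAt (fun s : ℂ => v (s * z)) (deriv v ((t:ℂ)*z) * z) ((t:ℂ)) := by
      have hd : HasDerivAt v (deriv v ((t:ℂ)*z)) ((t:ℂ)*z) :=
        ((hv _ hmem').differentiableAt).hasDerivAt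
      have := hd.comp (t:ℂ) ((hasDerivAt_id (t:ℂ)).mul_const z); simp only [one_mul] at this; exact this
    have h2 : HasDerivAt (fun s : ℝ => v ((s:ℂ) * z)) (deriv v ((t:ℂ)*z) * z) t :=
      h2c.comp_ofReal
    have hprod : HasDerivAt u _ t := h1.smul h2
    convert hprod using 1
    have hreal : (c * t^(c-1)) * ν * t = t ^ c := by
      calc (c * t^(c-1)) * ν * t = (ν * c) * (t^(c-1) * t) := by ring
        _ = t ^ c := by rw [hνc, htc, one_mul]
    have hC : ((c * t^(c-1) : ℝ) : ℂ) * (ν:ℂ) * (t:ℂ) = ((t^c : ℝ) : ℂ) := by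
      exact_mod_cast congrArg (fun x : ℝ => (x:ℂ)) hreal
    simp only [hG, real_smul]
    linear_combination hC * (deriv v ((t:ℂ)*z) * z)
  have hbound : ∀ t : ℝ, 0 < t → t ≤ 1 → ‖G t‖ ≤ (H * ‖z‖ * c) * t ^ c := by
    intro t ht ht1
    have hmem' := mem_unitDisk_smul hz ht.le ht1
    have htc : (t:ℝ) ^ (c-1) * t = t ^ c := by
      rw [← Real.rpow_add_one ht.ne' (c-1)]; ring_nf
    have h1 : (0:ℝ) ≤ c * t ^ (c-1) := by positivity
    have h2 := hb _ hmem'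
    rw [hG]
    simp only []
    rw [norm_smul, Real.norm_of_nonneg h1]
    have h3 : ‖(t:ℂ) * z‖ = t * ‖z‖ := by
      rw [norm_mul, Complex.norm_real, Real.norm_of_nonneg ht.le]
    calc (c * t^(c-1)) * ‖v ((t:ℂ)*z) + (ν:ℂ) * (((t:ℂ)*z) * deriv v ((t:ℂ)*z))‖
        ≤ (c * t^(c-1)) * (H * ‖(t:ℂ)*z‖) := mul_le_mul_of_nonneg_left h2 h1
      _ = (H * ‖z‖ * c) * (t^(c-1) * t) := by rw [h3]; ring
      _ = (H * ‖z‖ * c) * t ^ c := by rw [htc]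
  have hcont : ∀ ε : ℝ, 0 < ε → ε ≤ 1 → ContinuousOn G (Icc ε 1) := by
    intro ε hε hε1
    have hmap : MapsTo (fun t : ℝ => (t:ℂ) * z) (Icc ε 1) unitDisk := by
      intro t ht; exact mem_unitDisk_smul hz (le_trans hε.le ht.1) ht.2
    have hcm : ContinuousOn (fun t : ℝ => (t:ℂ) * z) (Icc ε 1) :=
      (Complex.continuous_ofReal.mul continuous_const).continuousOn
    have hcv : ContinuousOn (fun t : ℝ => v ((t:ℂ)*z)) (Icc ε 1) :=
      (hv.continuousOn).comp hcm hmap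
    have hcv' : ContinuousOn (fun t : ℝ => deriv v ((t:ℂ)*z)) (Icc ε 1) :=
      ((hv.deriv).continuousOn).comp hcm hmap
    have hrp : ContinuousOn (fun t : ℝ => c * t ^ (c-1)) (Icc ε 1) :=
      continuousOn_const.mul (fun t ht => (Real.continuousAt_rpow_const t (c-1)
        (Or.inl (ne_of_gt (lt_of_lt_of_le hε ht.1)))).continuousWithinAt)
    exact (hrp.smul (hcv.add (continuousOn_const.mul (hcm.mul hcv'))))
  have hstep : ∀ ε : ℝ, 0 < ε → ε ≤ 1 → ‖v z‖ ≤ H / (1+ν) * ‖z‖ + ‖v ((ε:ℂ)*z)‖ := by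
    intro ε hε hε1
    have hFTC : ∫ t in ε..(1:ℝ), G t = u 1 - u ε := by
      apply intervalIntegral.integral_eq_sub_of_hasDerivAt
      · intro t ht
        rw [uIcc_of_le hε1] at ht
        exact hderiv t (lt_of_lt_of_le hε ht.1) ht.2
      · apply ContinuousOn.intervalIntegrable
        rw [uIcc_of_le hε1]; exact hcont ε hε hε1
    have hfrac : (H * ‖z‖ * c) * (1/(c+1)) = H / (1+ν) * ‖z‖ := by
      rw [hc]; field_simp; try ring
    have hIb : ∫ t in ε..(1:ℝ), (H * ‖z‖ * c) * t ^ c ≤ H / (1+ν) * ‖z‖ := by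
      rw [intervalIntegral.integral_const_mul,
        integral_rpow (Or.inl (by linarith : (-1:ℝ) < c)), Real.one_rpow]
      have h0 : (0:ℝ) ≤ ε ^ (c+1) := Real.rpow_nonneg hε.le _
      have hm : (0:ℝ) ≤ H * ‖z‖ * c := by positivity
      calc (H * ‖z‖ * c) * ((1 - ε ^ (c+1)) / (c+1))
          ≤ (H * ‖z‖ * c) * (1/(c+1)) := by gcongr <;> linarith
        _ = H / (1+ν) * ‖z‖ := hfrac
    have hnorm : ‖u 1 - u ε‖ ≤ H / (1+ν) * ‖z‖ := by
      rw [← hFTC]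
      refine le_trans (intervalIntegral.norm_integral_le_abs_of_norm_le (g := fun t => H * ‖z‖ * c * t ^ c) ?_ ?_) ?_
      · filter_upwards [MeasureTheory.ae_restrict_mem measurableSet_uIoc] with t ht
        rw [uIoc_of_le hε1] at ht
        exact hbound t (lt_trans hε ht.1) ht.2
      · apply ContinuousOn.intervalIntegrable
        rw [uIcc_of_le hε1]
        exact continuousOn_const.mul (fun t ht => (Real.continuousAt_rpow_const t c
          (Or.inl (ne_of_gt (lt_of_lt_of_le hε ht.1)))).continuousWithinAt)
      · rw [_root_.abs_of_nonneg]
        · exact hIb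
        · apply intervalIntegral.integral_nonneg hε1
          intro t ht
          have : (0:ℝ) ≤ t ^ c := Real.rpow_nonneg (le_trans hε.le ht.1) c
          positivity
    have hu1 : u 1 = v z := by
      simp [hu, Real.one_rpow]
    have huε : ‖u ε‖ ≤ ‖v ((ε:ℂ)*z)‖ := by
      rw [hu]
      simp only [norm_smul, Real.norm_of_nonneg (Real.rpow_nonneg hε.le c)]
      have : ε ^ c ≤ 1 := Real.rpow_le_one hε.le hε1 hcpos.le
      nlinarith [norm_nonneg (v ((ε:ℂ)*z)), Real.rpow_nonneg hε.le c]
    calc ‖v z‖ = ‖(u 1 - u ε) + u ε‖ := by rw [hu1]; ring_nf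
      _ ≤ ‖u 1 - u ε‖ + ‖u ε‖ := norm_add_le _ _
      _ ≤ H / (1+ν) * ‖z‖ + ‖v ((ε:ℂ)*z)‖ := add_le_add hnorm huε
  have htend : Filter.Tendsto (fun ε : ℝ => ‖v ((ε:ℂ)*z)‖)
      (nhdsWithin 0 (Set.Ioi 0)) (nhds 0) := by
    have hca : ContinuousAt v 0 := (hv 0 zero_mem_unitDisk).continuousAt
    have h1 : Filter.Tendsto (fun ε : ℝ => (ε:ℂ)*z) (nhdsWithin 0 (Set.Ioi 0)) (nhds 0) := by
      have : Filter.Tendsto (fun ε : ℝ => (ε:ℂ)*z) (nhds 0) (nhds ((0:ℂ)*z)) :=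
        ((Complex.continuous_ofReal.mul continuous_const).tendsto 0)
      rw [zero_mul] at this
      exact this.mono_left nhdsWithin_le_nhds
    have h2 := (hca.tendsto.comp h1).norm
    simpa [hv0] using h2
  have hev : ∀ᶠ (ε : ℝ) in nhdsWithin (0:ℝ) (Set.Ioi (0:ℝ)),
      ‖v z‖ - H/(1+ν)*‖z‖ ≤ ‖v ((ε:ℂ)*z)‖ := by
    filter_upwards [Ioc_mem_nhdsGT_of_mem (by constructor <;> norm_num : (0:ℝ) ∈ Ico (0:ℝ) 1)]
      with ε hε
    have := hstep ε hε.1 hε.2; linarith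
  have := ge_of_tendsto htend hev
  linarith

lemma keyInt {cb : ℝ} (hcb : 0 ≤ cb) {q : ℂ → ℂ}
    (hq : AnalyticOnNhd ℂ q unitDisk) (hq0 : q 0 = 0)
    (hb : ∀ z ∈ unitDisk, ‖z * deriv q z‖ ≤ cb * ‖z‖) :
    ∀ z ∈ unitDisk, ‖q z‖ ≤ cb * ‖z‖ := by
  intro z hz
  set u : ℝ → ℂ := fun t => q ((t:ℂ) * z) with hu
  have hstep : ∀ ε : ℝ, 0 < ε → ε ≤ 1 → ‖q z‖ ≤ cb * ‖z‖ + ‖q ((ε:ℂ)*z)‖ := by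
    intro ε hε hε1
    have hder : ∀ t ∈ Icc ε 1, HasDerivWithinAt u (deriv q ((t:ℂ)*z) * z) (Icc ε 1) t := by
      intro t ht
      have hmem' := mem_unitDisk_smul hz (le_trans hε.le ht.1) ht.2
      have hd : HasDerivAt q (deriv q ((t:ℂ)*z)) ((t:ℂ)*z) :=
        ((hq _ hmem').differentiableAt).hasDerivAt
      have h2c : HasDerivAt (fun s : ℂ => q (s * z)) (deriv q ((t:ℂ)*z) * z) ((t:ℂ)) := by
        have := hd.comp (t:ℂ) ((hasDerivAt_id (t:ℂ)).mul_const z); simp only [one_mul] at this; exact this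
      exact h2c.comp_ofReal.hasDerivWithinAt
    have hbd : ∀ t ∈ Ico ε 1, ‖deriv q ((t:ℂ)*z) * z‖ ≤ cb * ‖z‖ := by
      intro t ht
      have htpos : 0 < t := lt_of_lt_of_le hε ht.1
      have hmem' := mem_unitDisk_smul hz htpos.le ht.2.le
      have h1 := hb _ hmem'
      have h2 : ‖(t:ℂ) * z * deriv q ((t:ℂ)*z)‖ = t * ‖deriv q ((t:ℂ)*z) * z‖ := by
        rw [norm_mul, norm_mul, norm_mul, Complex.norm_real, Real.norm_of_nonneg htpos.le]
        ring
      have h3 : ‖(t:ℂ)*z‖ = t * ‖z‖ := by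
        rw [norm_mul, Complex.norm_real, Real.norm_of_nonneg htpos.le]
      rw [h2, h3] at h1
      calc ‖deriv q ((t:ℂ)*z) * z‖ = (t * ‖deriv q ((t:ℂ)*z) * z‖)/t := by
            field_simp
        _ ≤ (cb * (t * ‖z‖))/t := by gcongr
        _ = cb * ‖z‖ := by field_simp
    have := norm_image_sub_le_of_norm_deriv_le_segment' hder hbd 1 (right_mem_Icc.mpr hε1)
    have hle : ‖u 1 - u ε‖ ≤ cb * ‖z‖ := by
      refine le_trans this ?_
      have : cb * ‖z‖ * (1 - ε) ≤ cb * ‖z‖ * 1 := by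
        apply mul_le_mul_of_nonneg_left (by linarith) (by positivity)
      linarith
    have hu1 : u 1 = q z := by simp [hu]
    calc ‖q z‖ = ‖(u 1 - u ε) + u ε‖ := by rw [hu1]; ring_nf
      _ ≤ ‖u 1 - u ε‖ + ‖u ε‖ := norm_add_le _ _
      _ ≤ cb * ‖z‖ + ‖q ((ε:ℂ)*z)‖ := add_le_add hle (le_refl _)
  have htend : Filter.Tendsto (fun ε : ℝ => ‖q ((ε:ℂ)*z)‖)
      (nhdsWithin 0 (Set.Ioi 0)) (nhds 0) := by
    have hca : ContinuousAt q 0 := (hq 0 zero_mem_unitDisk).continuousAt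
    have h1 : Filter.Tendsto (fun ε : ℝ => (ε:ℂ)*z) (nhdsWithin 0 (Set.Ioi 0)) (nhds 0) := by
      have : Filter.Tendsto (fun ε : ℝ => (ε:ℂ)*z) (nhds 0) (nhds ((0:ℂ)*z)) :=
        ((Complex.continuous_ofReal.mul continuous_const).tendsto 0)
      rw [zero_mul] at this
      exact this.mono_left nhdsWithin_le_nhds
    simpa [hq0] using (hca.tendsto.comp h1).norm
  have hev : ∀ᶠ (ε : ℝ) in nhdsWithin (0:ℝ) (Set.Ioi (0:ℝ)),
      ‖q z‖ - cb*‖z‖ ≤ ‖q ((ε:ℂ)*z)‖ := by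
    filter_upwards [Ioc_mem_nhdsGT_of_mem (by constructor <;> norm_num : (0:ℝ) ∈ Ico (0:ℝ) 1)]
      with ε hε
    have := hstep ε hε.1 hε.2; linarith
  have := ge_of_tendsto htend hev
  linarith

end Key
section Omega
open Metric Set

lemma sinh_def' (x : ℂ) : Complex.sinh x = (Complex.exp x - Complex.exp (-x))/2 := rfl
lemma cosh_def' (x : ℂ) : Complex.cosh x = (Complex.exp x + Complex.exp (-x))/2 := rfl

lemma half_re : ((1:ℂ)/2).re = 1/2 := by norm_num
lemma half_im : ((1:ℂ)/2).im = 0 := by norm_num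

lemma bean_bound (ζ : ℂ) (hζ : ‖ζ‖ = 1) : ‖bean ζ‖ ≤ 3 := by
  have him : |ζ.im| ≤ 1 := by rw [← hζ]; exact abs_im_le_norm ζ
  have hre : |ζ.re| ≤ 1 := by rw [← hζ]; exact abs_re_le_norm ζ
  have hcosre : 1/2 ≤ (Complex.cosh ζ).re := by
    rw [cosh_def']
    have h1 : (Complex.exp ζ).re = Real.exp ζ.re * Real.cos ζ.im := Complex.exp_re ζ
    have h2 : (Complex.exp (-ζ)).re = Real.exp (-ζ.re) * Real.cos ζ.im := by
      rw [Complex.exp_re]; simp [Real.cos_neg]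
    rw [show ((2:ℂ)) = ((2:ℝ):ℂ) by norm_num, div_ofReal_re, add_re, h1, h2]
    have hcos : 1/2 ≤ Real.cos ζ.im := by
      have := Real.one_sub_sq_div_two_le_cos (x := ζ.im)
      nlinarith [_root_.sq_abs ζ.im, abs_nonneg ζ.im]
    have hexp : 2 ≤ Real.exp ζ.re + Real.exp (-ζ.re) := by
      nlinarith [Real.exp_pos ζ.re, Real.exp_pos (-ζ.re), sq_nonneg (Real.exp ζ.re - 1),
        Real.exp_neg ζ.re, mul_pos (Real.exp_pos ζ.re) (Real.exp_pos (-ζ.re)),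
        (by rw [← Real.exp_add]; simp : Real.exp ζ.re * Real.exp (-ζ.re) = 1)]
    calc (1:ℝ)/2 ≤ Real.cos ζ.im * ((Real.exp ζ.re + Real.exp (-ζ.re))/2) := by nlinarith
      _ = (Real.exp ζ.re * Real.cos ζ.im + Real.exp (-ζ.re) * Real.cos ζ.im) / 2 := by ring
  have hcoshabs : 1/2 ≤ ‖Complex.cosh ζ‖ := le_trans hcosre (re_le_norm _)
  have hcoshne : Complex.cosh ζ ≠ 0 := by
    intro h; rw [h] at hcoshabs; simp at hcoshabs; linarith
  have hsinh : ‖Complex.sinh ζ‖ ≤ 3 := by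
    rw [sinh_def']
    have h1 : ‖Complex.exp ζ‖ ≤ 3 := by
      rw [Complex.norm_exp]
      calc Real.exp ζ.re ≤ Real.exp 1 := Real.exp_le_exp.mpr (le_trans (le_abs_self _) hre)
        _ ≤ 3 := by linarith [Real.exp_one_lt_d9]
    have h2 : ‖Complex.exp (-ζ)‖ ≤ 3 := by
      rw [Complex.norm_exp]
      have : -ζ.re ≤ 1 := by cases' abs_le.mp hre with h _; linarith
      calc Real.exp (-ζ).re ≤ Real.exp 1 := Real.exp_le_exp.mpr (by simpa using this)
        _ ≤ 3 := by linarith [Real.exp_one_lt_d9]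
    calc ‖(Complex.exp ζ - Complex.exp (-ζ))/2‖
        ≤ (‖Complex.exp ζ‖ + ‖Complex.exp (-ζ)‖)/2 := by
          rw [norm_div]
          rw [show ‖(2:ℂ)‖ = 2 by simp]
          gcongr
          exact (norm_sub_le _ _)
      _ ≤ 3 := by linarith
  have htanh : ‖Complex.tanh ζ‖ ≤ 6 := by
    rw [Complex.tanh_eq_sinh_div_cosh, norm_div]
    rw [div_le_iff₀ (by linarith : (0:ℝ) < ‖Complex.cosh ζ‖)]
    nlinarith
  have h1t : ‖1 + Complex.tanh ζ‖ ≤ 7 := by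
    calc ‖1 + Complex.tanh ζ‖ ≤ ‖(1:ℂ)‖ + ‖Complex.tanh ζ‖ :=
          norm_add_le _ _
      _ ≤ 7 := by rw [norm_one]; linarith
  have habs0 : (0:ℝ) ≤ ‖1 + Complex.tanh ζ‖ := norm_nonneg _
  rw [bean]
  calc ‖(1 + Complex.tanh ζ) ^ ((1:ℂ)/2)‖
      ≤ ‖1 + Complex.tanh ζ‖ ^ (((1:ℂ)/2).re) / Real.exp ((1 + Complex.tanh ζ).arg * ((1:ℂ)/2).im) :=
        Complex.norm_cpow_le _ _
    _ = ‖1 + Complex.tanh ζ‖ ^ ((1:ℝ)/2) := by rw [half_re, half_im]; simp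
    _ = Real.sqrt (‖1 + Complex.tanh ζ‖) := by rw [Real.sqrt_eq_rpow]
    _ ≤ Real.sqrt 9 := Real.sqrt_le_sqrt (by linarith)
    _ = 3 := by rw [show (9:ℝ) = 3^2 by norm_num, Real.sqrt_sq (by norm_num : (0:ℝ) ≤ 3)]

lemma one_le_ω₀ : 1 ≤ ω₀ := by
  have hbdd : BddAbove ((fun θ : ℝ => ‖bean (Complex.exp (θ * Complex.I))‖) ''
      Set.Ico 0 (2 * Real.pi)) := by
    refine ⟨3, ?_⟩
    rintro y ⟨θ, _, rfl⟩
    exact bean_bound _ (norm_exp_ofReal_mul_I θ)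
  have hmem : ‖bean (Complex.exp ((0:ℝ) * Complex.I))‖ ∈
      ((fun θ : ℝ => ‖bean (Complex.exp (θ * Complex.I))‖) '' Set.Ico 0 (2 * Real.pi)) :=
    ⟨0, ⟨le_refl _, by positivity⟩, rfl⟩
  have hval : 1 ≤ ‖bean (Complex.exp ((0:ℝ) * Complex.I))‖ := by
    have h0 : Complex.exp ((0:ℝ) * Complex.I) = 1 := by
      simp
    rw [h0, bean]
    have htanh1 : Complex.tanh 1 = ((Real.tanh 1 : ℝ) : ℂ) := by
      rw [show (1:ℂ) = ((1:ℝ):ℂ) by norm_num, Complex.ofReal_tanh]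
    have ht0 : 0 ≤ Real.tanh 1 := by
      rw [Real.tanh_eq_sinh_div_cosh]
      exact div_nonneg (by positivity) (Real.cosh_pos 1).le
    rw [htanh1, show (1:ℂ) + ((Real.tanh 1 : ℝ):ℂ) = (((1 + Real.tanh 1 : ℝ)):ℂ) by push_cast; ring]
    rw [Complex.norm_cpow_eq_rpow_re_of_pos (by linarith) _, half_re]
    rw [← Real.sqrt_eq_rpow]
    rw [show (1:ℝ) = Real.sqrt 1 by simp]
    exact Real.sqrt_le_sqrt (by simp; linarith)
  exact le_trans hval (le_csSup hbdd hmem)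


end Omega

set_option maxHeartbeats 1000000 in

lemma numeric_step {γ β K ω : ℝ} (hβ : 0 < β) (hK : 0 < K) (hω : 1 ≤ ω)
    (hcond : (K + 1 + ω) * (Real.exp 1 ^ 2 + 1) ^ ((7 : ℝ) / 2) ≤
        Real.sqrt 2 * Real.exp 1 *
          (γ * (1 + Real.exp 1 ^ 2) ^ 2 + β * (1 - 2 * Real.exp 1 ^ 4 - Real.exp 1 ^ 2))) :
    25/4 * (K + 2) + 163/100 * β ≤ γ := by
  have he1 : 2.7182818283 < Real.exp 1 := Real.exp_one_gt_d9
  have he2 : Real.exp 1 < 2.7182818286 := Real.exp_one_lt_d9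
  set E := Real.exp 1 with hE
  clear_value E
  have hy : 7.389 ≤ E^2 := by nlinarith
  have hx : (0:ℝ) < E^2+1 := by positivity
  set S := (E^2+1) ^ ((7:ℝ)/2) with hS
  clear_value S
  have hSpos : 0 < S := by rw [hS]; exact Real.rpow_pos_of_pos hx _
  have hs2 : S^2 = (E^2+1)^7 := by
    rw [hS, ← Real.rpow_natCast ((E^2+1) ^ ((7:ℝ)/2)) 2, ← Real.rpow_mul hx.le]
    rw [show (7:ℝ)/2 * ((2:ℕ):ℝ) = ((7:ℕ):ℝ) by norm_num, Real.rpow_natCast]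
  have hsq2 : Real.sqrt 2 ^ 2 = 2 := Real.sq_sqrt (by norm_num)
  have hsq2pos : 0 < Real.sqrt 2 := Real.sqrt_pos.mpr (by norm_num)
  have hEpos : (0:ℝ) < E := by rw [hE]; exact Real.exp_pos 1
  set F := Real.sqrt 2 * E * (1+E^2)^2 with hF
  clear_value F
  have hFpos : (0:ℝ) < F := by rw [hF]; positivity
  set P := Real.sqrt 2 * E * β * (2*E^4 + E^2 - 1) with hP
  clear_value P
  have hcube : (625/8) * E^2 ≤ (E^2+1)^3 := by
    nlinarith [hy, mul_nonneg (sub_nonneg.mpr hy) (sq_nonneg (E^2+1))]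
  have hkey1 : 25/4 * F ≤ S := by
    have ha : (0:ℝ) ≤ 25/4 * F := by positivity
    have h2 : (25/4 * F)^2 ≤ S^2 := by
      have hL : (25/4 * F)^2 = 625/8 * E^2 * (E^2+1)^4 := by
        rw [hF]
        calc (25/4 * (Real.sqrt 2 * E * (1+E^2)^2))^2
            = 625/16 * (Real.sqrt 2 ^2 * E^2 * (E^2+1)^4) := by ring
          _ = 625/8 * E^2 * (E^2+1)^4 := by rw [hsq2]; ring
      rw [hL, hs2]
      nlinarith [hcube, pow_pos hx 4]
    nlinarith [h2, ha, hSpos]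
  have hkey2 : 163/100 * β * F ≤ P := by
    have h0 : 163/100 * (1+E^2)^2 ≤ 2*E^4 + E^2 - 1 := by nlinarith [hy]
    have := mul_le_mul_of_nonneg_left h0 (by positivity : (0:ℝ) ≤ Real.sqrt 2 * E * β)
    rw [hP, hF]; linarith [this]
  have hmain : (K+2) * S ≤ γ * F - P := by
    calc (K+2)*S ≤ (K+1+ω) * S := mul_le_mul_of_nonneg_right (by linarith) hSpos.le
      _ ≤ Real.sqrt 2 * E * (γ * (1 + E^2)^2 + β * (1 - 2*E^4 - E^2)) := hcond
      _ = γ * F - P := by rw [hF, hP]; ring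
  have h1 : 25/4 * (K+2) * F ≤ (K+2) * S := by
    have := mul_le_mul_of_nonneg_left hkey1 (by linarith : (0:ℝ) ≤ K+2)
    linarith [this]
  have hsum : (25/4 * (K+2) + 163/100 * β) * F ≤ γ * F := by linarith [h1, hkey2, hmain]
  exact le_of_mul_le_mul_right hsum hFpos

section Final
open Metric Set

lemma re_ge_of_close {x : ℂ} {r : ℝ} (h : ‖x - 1‖ ≤ r) : 1 - r ≤ x.re := by
  have h1 : (1 - x).re ≤ ‖1 - x‖ := Complex.re_le_norm _
  rw [norm_sub_rev] at h1
  simp only [Complex.sub_re, Complex.one_re] at h1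
  linarith

lemma re_le_of_close {x : ℂ} {r : ℝ} (h : ‖x - 1‖ ≤ r) : x.re ≤ 1 + r := by
  have h1 : (x - 1).re ≤ ‖x - 1‖ := Complex.re_le_norm _
  simp only [Complex.sub_re, Complex.one_re] at h1
  linarith

lemma finalSubord {p : ℂ → ℂ} (hp : DifferentiableOn ℂ p unitDisk) (hp0 : p 0 = 1)
    (hpb : ∀ z ∈ unitDisk, ‖p z - 1‖ ≤ 4/25) : Subord p bean := by
  have hsq : ∀ z ∈ unitDisk, ‖p z ^ 2 - 1‖ ≤ 9/25 := by
    intro z hz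
    have h1 := hpb z hz
    have h2 : ‖p z + 1‖ ≤ 54/25 := by
      calc ‖p z + 1‖ = ‖(p z - 1) + 2‖ := by ring_nf
      _ ≤ ‖p z - 1‖ + ‖(2:ℂ)‖ := norm_add_le _ _
      _ ≤ 54/25 := by rw [show ‖(2:ℂ)‖ = 2 by simp]; linarith
    calc ‖p z ^ 2 - 1‖ = ‖p z - 1‖ * ‖p z + 1‖ := by rw [← norm_mul]; ring_nf
      _ ≤ 4/25 * (54/25) := by
          apply mul_le_mul h1 h2 (norm_nonneg _) (by norm_num)
      _ ≤ 9/25 := by norm_num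
  have hre2 : ∀ z ∈ unitDisk, 16/25 ≤ (p z ^ 2).re := by
    intro z hz
    have := re_ge_of_close (hsq z hz)
    linarith
  have h2re : ∀ z ∈ unitDisk, 16/25 ≤ ((2:ℂ) - p z ^ 2).re := by
    intro z hz
    have := re_le_of_close (hsq z hz)
    simp only [Complex.sub_re]
    rw [show ((2:ℂ)).re = 2 by simp]
    linarith
  have hslit1 : ∀ z ∈ unitDisk, p z ^ 2 ∈ Complex.slitPlane := by
    intro z hz; exact Or.inl (by linarith [hre2 z hz])
  have hslit2 : ∀ z ∈ unitDisk, (2:ℂ) - p z ^ 2 ∈ Complex.slitPlane := by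
    intro z hz; exact Or.inl (by linarith [h2re z hz])
  have hane : ∀ z ∈ unitDisk, p z ≠ 0 := by
    intro z hz hc
    have := re_ge_of_close (hpb z hz)
    rw [hc] at this; simp at this; linarith
  have ha2ne : ∀ z ∈ unitDisk, p z ^ 2 ≠ 0 := fun z hz => pow_ne_zero 2 (hane z hz)
  have h2ne : ∀ z ∈ unitDisk, (2:ℂ) - p z ^ 2 ≠ 0 := by
    intro z hz hc
    have := h2re z hz
    rw [hc] at this; simp at this; linarith
  set w : ℂ → ℂ := fun z => (1/2 : ℂ) *
    (Complex.log (p z ^ 2) - Complex.log (2 - p z ^ 2)) with hwdef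
  refine ⟨w, ?_, ?_, ?_, ?_⟩
  · -- differentiability
    apply DifferentiableOn.const_mul
    exact ((hp.pow 2).clog hslit1).sub
      (((differentiableOn_const _).sub (hp.pow 2)).clog hslit2)
  · rw [hwdef]; simp [hp0]; norm_num
  · -- norm bound
    intro z hz
    rw [hwdef]
    have e1 : Complex.log (p z ^ 2) = Complex.log (1 + (p z ^ 2 - 1)) := by ring_nf
    have e2 : Complex.log (2 - p z ^ 2) = Complex.log (1 + (1 - p z ^ 2)) := by ring_nf
    have b1 : ‖Complex.log (p z ^ 2)‖ ≤ 27/50 := by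
      rw [e1]
      calc ‖Complex.log (1 + (p z ^ 2 - 1))‖ ≤ 3/2 * ‖p z ^ 2 - 1‖ :=
            Complex.norm_log_one_add_half_le_self (by linarith [hsq z hz])
        _ ≤ 27/50 := by linarith [hsq z hz]
    have b2 : ‖Complex.log (2 - p z ^ 2)‖ ≤ 27/50 := by
      rw [e2]
      have h3 : ‖1 - p z ^ 2‖ ≤ 9/25 := by rw [norm_sub_rev]; exact hsq z hz
      calc ‖Complex.log (1 + (1 - p z ^ 2))‖ ≤ 3/2 * ‖1 - p z ^ 2‖ :=
            Complex.norm_log_one_add_half_le_self (by linarith)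
        _ ≤ 27/50 := by linarith
    calc ‖(1/2 : ℂ) * (Complex.log (p z ^ 2) - Complex.log (2 - p z ^ 2))‖
        = 1/2 * ‖Complex.log (p z ^ 2) - Complex.log (2 - p z ^ 2)‖ := by
          rw [norm_mul]; norm_num
      _ ≤ 1/2 * (‖Complex.log (p z ^ 2)‖ + ‖Complex.log (2 - p z ^ 2)‖) := by
          have := norm_sub_le (Complex.log (p z ^ 2)) (Complex.log (2 - p z ^ 2))
          linarith
      _ < 1 := by linarith
  · -- the functional equation
    intro z hz
    have hexp2w : Complex.exp (2 * w z) = p z ^ 2 / (2 - p z ^ 2) := by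
      rw [hwdef]
      rw [show (2:ℂ) * ((1/2 : ℂ) * (Complex.log (p z ^ 2) - Complex.log (2 - p z ^ 2)))
          = Complex.log (p z ^ 2) - Complex.log (2 - p z ^ 2) by ring]
      rw [Complex.exp_sub, Complex.exp_log (ha2ne z hz), Complex.exp_log (h2ne z hz)]
    have htanh : Complex.tanh (w z) = p z ^ 2 - 1 := by
      have hformula : Complex.tanh (w z) =
          (Complex.exp (2 * w z) - 1) / (Complex.exp (2 * w z) + 1) := by
        rw [Complex.tanh_eq_sinh_div_cosh]
        rw [show Complex.sinh (w z) = (Complex.exp (w z) - Complex.exp (-w z))/2 from rfl]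
        rw [show Complex.cosh (w z) = (Complex.exp (w z) + Complex.exp (-w z))/2 from rfl]
        have hne : Complex.exp (w z) ≠ 0 := Complex.exp_ne_zero _
        have h2w : Complex.exp (2 * w z) = Complex.exp (w z) * Complex.exp (w z) := by
          rw [← Complex.exp_add]; ring_nf
        have hnegw : Complex.exp (-w z) = (Complex.exp (w z))⁻¹ := by
          rw [← Complex.exp_neg]
        rw [h2w, hnegw]
        field_simp
        try ring
      rw [hformula, hexp2w]
      have h2ne' := h2ne z hz
      field_simp
      ring
    have hbean : bean (w z) = (p z ^ 2) ^ ((1:ℂ)/2) := by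
      rw [bean, htanh]
      ring_nf
    rw [hbean]
    -- (p z ^ 2) ^ (1/2) = p z
    have hlogsq : Complex.log (p z ^ 2) = 2 * Complex.log (p z) := by
      have hexp : Complex.exp (2 * Complex.log (p z)) = p z ^ 2 := by
        rw [two_mul, Complex.exp_add, Complex.exp_log (hane z hz)]; ring
      rw [← hexp, Complex.log_exp]
      · have harg : |Complex.arg (p z)| < Real.pi / 2 :=
          Complex.abs_arg_lt_pi_div_two_iff.mpr (Or.inl (by linarith [re_ge_of_close (hpb z hz)]))
        have him : (2 * Complex.log (p z)).im = 2 * Complex.arg (p z) := by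
          simp [Complex.log_im]
        rw [him]
        cases' abs_lt.mp harg with h1 h2
        linarith
      · have harg : |Complex.arg (p z)| < Real.pi / 2 :=
          Complex.abs_arg_lt_pi_div_two_iff.mpr (Or.inl (by linarith [re_ge_of_close (hpb z hz)]))
        have him : (2 * Complex.log (p z)).im = 2 * Complex.arg (p z) := by
          simp [Complex.log_im]
        rw [him]
        cases' abs_lt.mp harg with h1 h2
        linarith [Real.pi_pos]
    rw [Complex.cpow_def_of_ne_zero (ha2ne z hz), hlogsq]
    rw [show (2 : ℂ) * Complex.log (p z) * ((1:ℂ)/2) = Complex.log (p z) by ring]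
    rw [Complex.exp_log (hane z hz)]

end Final

set_option maxHeartbeats 1000000 in
theorem stmt_15 (δ : ℕ) (hδ : δ = 0 ∨ δ = 1)
    (A B : ℝ) (hB1 : -1 < B) (hB0 : B ≤ 0) (hA0 : 0 < A) (hA1 : A ≤ 1)
    (γ β : ℝ) (hγ : 0 < γ) (hβ : 0 < β)
    (hcond : ((1 + A) / (1 + B) + ω₀ ^ δ) * (Real.exp 1 ^ 2 + 1) ^ ((7 : ℝ) / 2) ≤
        Real.sqrt 2 * Real.exp 1 *
          (γ * (1 + Real.exp 1 ^ 2) ^ 2 + β * (1 - 2 * Real.exp 1 ^ 4 - Real.exp 1 ^ 2)))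
    (p : ℂ → ℂ) (hp : DifferentiableOn ℂ p unitDisk) (hp0 : p 0 = 1)
    (hsub : Subord (fun z => p z ^ δ + (γ : ℂ) * (z * deriv p z) +
        (β : ℂ) * (z ^ 2 * deriv (deriv p) z))
        (fun z => (1 + (A : ℂ) * z) / (1 + (B : ℂ) * z))) :
    Subord p bean := by
  obtain ⟨w1, hw1d, hw10, hw1lt, hw1eq⟩ := hsub
  have hBpos : (0:ℝ) < 1 + B := by linarith
  set K := (A - B)/(1+B) with hKdef
  have hK : 0 < K := by apply div_pos <;> linarith
  have hω : 1 ≤ ω₀ ^ δ := by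
    rcases hδ with h|h <;> subst h
    · simp
    · simpa using one_le_ω₀
  have hcond' : (K + 1 + ω₀^δ) * (Real.exp 1 ^2+1)^((7:ℝ)/2) ≤
      Real.sqrt 2 * Real.exp 1 *
        (γ * (1 + Real.exp 1 ^ 2) ^ 2 + β * (1 - 2 * Real.exp 1 ^ 4 - Real.exp 1 ^ 2)) := by
    have hAB : (1+A)/(1+B) = K + 1 := by rw [hKdef]; field_simp; ring
    calc (K + 1 + ω₀^δ) * (Real.exp 1 ^2+1)^((7:ℝ)/2)
        = ((1+A)/(1+B) + ω₀^δ) * (Real.exp 1 ^2+1)^((7:ℝ)/2) := by rw [hAB]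
      _ ≤ _ := hcond
  have hγK : 25/4*(K+2) + 163/100*β ≤ γ := numeric_step hβ hK hω hcond'
  -- the bound on the subordinated expression
  have hFb : ∀ z ∈ unitDisk, ‖p z ^ δ + (γ:ℂ)*(z*deriv p z) + (β:ℂ)*(z^2*deriv (deriv p) z) - 1‖
      ≤ K * ‖z‖ := by
    intro z hz
    have heq : p z ^ δ + (γ:ℂ)*(z*deriv p z) + (β:ℂ)*(z^2*deriv (deriv p) z)
        = (1 + (A:ℂ) * w1 z) / (1 + (B:ℂ) * w1 z) := hw1eq z hz
    have hwa : ‖w1 z‖ ≤ ‖z‖ := by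
      apply Complex.norm_le_norm_of_mapsTo_ball_self hw1d ?_ hw10 ?_
      · intro x hx
        rw [Metric.mem_closedBall, dist_zero_right]
        exact (hw1lt x hx).le
      · rw [← mem_ball_zero_iff]; exact hz
    have hwlt : ‖w1 z‖ < 1 := hw1lt z hz
    have hBw : ‖(B:ℂ) * w1 z‖ ≤ -B := by
      rw [norm_mul, Complex.norm_real, Real.norm_eq_abs, abs_of_nonpos hB0]
      nlinarith [norm_nonneg (w1 z), neg_nonneg.mpr hB0]
    have hdenlb : 1 + B ≤ ‖1 + (B:ℂ) * w1 z‖ := by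
      have h2 : (1:ℝ) ≤ ‖(1:ℂ)+(B:ℂ)*w1 z‖ + ‖(B:ℂ)*w1 z‖ := by
        have := norm_add_le ((1:ℂ)+(B:ℂ)*w1 z) (-((B:ℂ)*w1 z))
        simpa using this
      linarith
    have hden : (1:ℂ) + (B:ℂ) * w1 z ≠ 0 := by
      intro hc
      rw [hc] at hdenlb; simp at hdenlb; linarith
    have heq2 : p z ^ δ + (γ:ℂ)*(z*deriv p z) + (β:ℂ)*(z^2*deriv (deriv p) z) - 1
        = (((A:ℂ)-B) * w1 z) / (1 + (B:ℂ)*w1 z) := by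
      rw [heq, div_sub_one hden]; ring
    rw [heq2] at *
    rw [norm_div, norm_mul]
    have hABc : ‖((A:ℂ)-(B:ℂ))‖ = A - B := by
      rw [show ((A:ℂ)-(B:ℂ)) = ((A-B:ℝ):ℂ) by push_cast; ring, Complex.norm_real,
        Real.norm_of_nonneg (by linarith)]
    rw [hABc]
    calc (A-B) * ‖w1 z‖ / ‖1+(B:ℂ)*w1 z‖ ≤ (A-B) * ‖z‖ / (1+B) := by
          apply div_le_div₀ (mul_nonneg (by linarith) (norm_nonneg z)) ?_ hBpos hdenlb
          exact mul_le_mul_of_nonneg_left hwa (by linarith)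
      _ = K * ‖z‖ := by rw [hKdef]; ring
  -- the function q = p - 1
  set q : ℂ → ℂ := fun x => p x - 1 with hqdef
  have hpA : AnalyticOnNhd ℂ p unitDisk := hp.analyticOnNhd Metric.isOpen_ball
  have hqA : AnalyticOnNhd ℂ q unitDisk := by
    rw [hqdef]; exact hpA.sub analyticOnNhd_const
  have hq0 : q 0 = 0 := by rw [hqdef]; simp [hp0]
  have hdq : deriv q = deriv p := by
    funext x; rw [hqdef]; exact deriv_sub_const _
  have hddq : deriv (deriv q) = deriv (deriv p) := by rw [hdq]
  have hKγnn : 0 ≤ K/γ := by positivity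
  -- second derivative of fun x => x * deriv q x
  have hdv2 : ∀ z ∈ unitDisk, HasDerivAt (fun x => x * deriv q x)
      (deriv q z + z * deriv (deriv q) z) z := by
    intro z hz
    have h1 : HasDerivAt (deriv q) (deriv (deriv q) z) z :=
      ((hqA.deriv) z hz).differentiableAt.hasDerivAt
    have := (hasDerivAt_id z).mul h1; simp only [one_mul] at this; exact this
  -- the key bound
  have hqb : ∀ z ∈ unitDisk, ‖q z‖ ≤ K/γ * ‖z‖ := by
    rcases hδ with h|h <;> subst h
    · -- δ = 0 case
      have hγβ : β < γ := by linarith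
      have hγβpos : (0:ℝ) < γ - β := by linarith
      set ν := β/(γ-β) with hνdef
      have hνpos : 0 < ν := div_pos hβ hγβpos
      have hcast : ((γ:ℂ)-(β:ℂ)) ≠ 0 := by
        rw [show ((γ:ℂ)-(β:ℂ)) = ((γ-β:ℝ):ℂ) by push_cast; ring]
        exact Complex.ofReal_ne_zero.mpr (ne_of_gt hγβpos)
      have hvb : ∀ z ∈ unitDisk, ‖(fun x => x * deriv q x) z
          + (ν:ℂ) * (z * deriv (fun x => x * deriv q x) z)‖ ≤ (K/(γ-β)) * ‖z‖ := by
        intro z hz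
        have hdv := (hdv2 z hz).deriv
        have hid : (fun x => x * deriv q x) z
            + (ν:ℂ) * (z * deriv (fun x => x * deriv q x) z)
            = ((γ:ℂ)-(β:ℂ))⁻¹ * ((γ:ℂ)*(z*deriv q z) + (β:ℂ)*(z^2*deriv (deriv q) z)) := by
          simp only [hdv]
          have hνc : ((ν:ℝ):ℂ) * ((γ:ℂ)-(β:ℂ)) = (β:ℂ) := by
            rw [hνdef]; push_cast; field_simp
          field_simp
          linear_combination (z * deriv q z + z^2 * deriv (deriv q) z) * hνc
        rw [hid, norm_mul]
        have hF : (γ:ℂ)*(z*deriv q z) + (β:ℂ)*(z^2*deriv (deriv q) z)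
            = p z ^ 0 + (γ:ℂ)*(z*deriv p z) + (β:ℂ)*(z^2*deriv (deriv p) z) - 1 := by
          rw [pow_zero, hdq]; ring
        have hinv : ‖((γ:ℂ)-(β:ℂ))⁻¹‖ = (γ-β)⁻¹ := by
          rw [show ((γ:ℂ)-(β:ℂ)) = ((γ-β:ℝ):ℂ) by push_cast; ring]
          rw [norm_inv, Complex.norm_real, Real.norm_of_nonneg hγβpos.le]
        rw [hF, hinv]
        have h5 := hFb z hz
        calc (γ-β)⁻¹ * ‖p z ^ 0 + (γ:ℂ)*(z*deriv p z) + (β:ℂ)*(z^2*deriv (deriv p) z) - 1‖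
            ≤ (γ-β)⁻¹ * (K * ‖z‖) :=
              mul_le_mul_of_nonneg_left h5 (by positivity)
          _ = (K/(γ-β)) * ‖z‖ := by field_simp; try ring
      have hvA : AnalyticOnNhd ℂ (fun x => x * deriv q x) unitDisk :=
        (analyticOnNhd_id).mul hqA.deriv
      have hv := keyStep hνpos (by positivity) hvA (by simp) hvb
      have hsimpl : (K/(γ-β))/(1+ν) = K/γ := by
        rw [hνdef]; field_simp; try ring
      intro z hz
      apply keyInt hKγnn hqA hq0 ?_ z hz
      intro x hx
      have := hv x hx
      rw [hsimpl] at this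
      exact this
    · -- δ = 1 case
      have hγβ : β < γ := by linarith
      have hΔ : 0 ≤ (γ-β)^2 - 4*β := by nlinarith
      set d := Real.sqrt ((γ-β)^2 - 4*β) with hddef
      have hd0 : 0 ≤ d := Real.sqrt_nonneg _
      have hd2 : d^2 = (γ-β)^2 - 4*β := Real.sq_sqrt hΔ
      have hdlt : d < γ - β := by nlinarith
      set μ := ((γ-β)+d)/2 with hμdef
      set ν := ((γ-β)-d)/2 with hνdef
      have hμpos : 0 < μ := by rw [hμdef]; have : (0:ℝ) < γ - β := by linarith
                               linarith
      have hνpos : 0 < ν := by rw [hνdef]; linarith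
      have hμν : μ * ν = β := by
        have h1 : μ*ν = ((γ-β)^2 - d^2)/4 := by rw [hμdef, hνdef]; ring
        rw [hd2] at h1; linarith
      have hμνsum : μ + ν = γ - β := by rw [hμdef, hνdef]; ring
      have hc1 : ((μ:ℝ):ℂ) * ((ν:ℝ):ℂ) = (β:ℂ) := by
        rw [← Complex.ofReal_mul, hμν]
      have hc2 : ((μ:ℝ):ℂ) + ((ν:ℝ):ℂ) = (γ:ℂ) - (β:ℂ) := by
        rw [← Complex.ofReal_add, hμνsum]; push_cast; ring
      set v : ℂ → ℂ := fun x => q x + (μ:ℂ)*(x*deriv q x) with hvdef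
      have hvA : AnalyticOnNhd ℂ v unitDisk := by
        rw [hvdef]
        exact hqA.add (analyticOnNhd_const.mul ((analyticOnNhd_id).mul hqA.deriv))
      have hv0 : v 0 = 0 := by rw [hvdef]; simp [hq0]
      have hderv : ∀ z ∈ unitDisk, deriv v z
          = deriv q z + (μ:ℂ)*(deriv q z + z * deriv (deriv q) z) := by
        intro z hz
        have h1 : HasDerivAt q (deriv q z) z := ((hqA z hz)).differentiableAt.hasDerivAt
        have h2 := hdv2 z hz
        have := h1.add (h2.const_mul ((μ:ℝ):ℂ))
        rw [hvdef]
        exact this.deriv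
      have hvb : ∀ z ∈ unitDisk, ‖v z + (ν:ℂ) * (z * deriv v z)‖ ≤ K * ‖z‖ := by
        intro z hz
        have hid : v z + (ν:ℂ) * (z * deriv v z)
            = p z ^ 1 + (γ:ℂ)*(z*deriv p z) + (β:ℂ)*(z^2*deriv (deriv p) z) - 1 := by
          rw [hderv z hz, hvdef]
          simp only [pow_one, hqdef]
          rw [← hdq]
          linear_combination (z*deriv q z) * hc2 + (z*deriv q z) * hc1
            + (z^2*deriv (deriv q) z) * hc1
        rw [hid]
        exact hFb z hz
      have hv := keyStep hνpos hK.le hvA hv0 hvb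
      have hqstep : ∀ z ∈ unitDisk, ‖q z + (μ:ℂ)*(z*deriv q z)‖ ≤ (K/(1+ν)) * ‖z‖ := by
        intro z hz; exact hv z hz
      have hq2 := keyStep hμpos (by positivity) hqA hq0 hqstep
      intro z hz
      have := hq2 z hz
      have hle : (K/(1+ν))/(1+μ) ≤ K/γ := by
        have he : (K/(1+ν))/(1+μ) = K/(1+γ) := by
          rw [div_div]
          congr 1
          nlinarith [hμν, hμνsum]
        rw [he]
        apply div_le_div_of_nonneg_left hK.le hγ (by linarith)
      calc ‖q z‖ ≤ ((K/(1+ν))/(1+μ)) * ‖z‖ := this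
        _ ≤ K/γ * ‖z‖ := mul_le_mul_of_nonneg_right hle (norm_nonneg z)
  -- conclude |p - 1| ≤ 4/25
  have hpb : ∀ z ∈ unitDisk, ‖p z - 1‖ ≤ 4/25 := by
    intro z hz
    have h1 := hqb z hz
    have h2 : ‖z‖ ≤ 1 := by
      have : z ∈ Metric.ball (0:ℂ) 1 := hz
      rw [Metric.mem_ball, dist_zero_right] at this
      linarith
    have h3 : K/γ ≤ 4/25 := by
      rw [div_le_div_iff₀ hγ (by norm_num)]
      linarith
    have : ‖q z‖ ≤ K/γ := by
      calc ‖q z‖ ≤ K/γ * ‖z‖ := h1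
        _ ≤ K/γ * 1 := mul_le_mul_of_nonneg_left h2 hKγnn
        _ = K/γ := by ring
    rw [hqdef] at this
    linarith
  exact finalSubord hp hp0 hpb
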